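/- (Theorem 1(i)) Suppose X_1, …, X_n affinely span ℝ^d. Then the sample mean θ̃ lies in Θ_n, the composite similarity mapping h satisfies h(θ̃) = θ̃, and θ̃ is the unique fixed point of h: for every θ ∈ Θ_n with θ ≠ θ̃ one has h(θ) ≠ θ. -/

import Mathlib

noncomputable section

/-- The set of empirical likelihood weight vectors for `θ`:
`W(θ) = {w : wᵢ ≥ 0, Σ wᵢ = 1, Σ wᵢ Xᵢ = θ}`. -/
def Wset (n d : ℕ) (X : Fin n → EuclideanSpace ℝ (Fin d))
    (θ : EuclideanSpace ℝ (Fin d)) : Set (Fin n → ℝ) :=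
  {w | (∀ i, 0 ≤ w i) ∧ ∑ i, w i = 1 ∧ ∑ i, w i • X i = θ}

/-- The empirical likelihood ratio `R(θ) = sup {∏ n·wᵢ : w ∈ W(θ)}` (the sup over
the empty set is `0`, since `Real.sSup ∅ = 0`). -/
def elR (n d : ℕ) (X : Fin n → EuclideanSpace ℝ (Fin d))
    (θ : EuclideanSpace ℝ (Fin d)) : ℝ :=
  sSup ((fun w => ∏ i, (n : ℝ) * w i) '' Wset n d X θ)

/-- The empirical log-likelihood ratio `l(θ) = -2 log R(θ)`. -/
def elln (n d : ℕ) (X : Fin n → EuclideanSpace ℝ (Fin d))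
    (θ : EuclideanSpace ℝ (Fin d)) : ℝ :=
  -2 * Real.log (elR n d X θ)

/-- The sample mean `θ̃ = n⁻¹ Σ Xᵢ`. -/
def sampleMean (n d : ℕ) (X : Fin n → EuclideanSpace ℝ (Fin d)) :
    EuclideanSpace ℝ (Fin d) :=
  (n : ℝ)⁻¹ • ∑ i, X i

/-- The composite similarity mapping `h(θ) = θ̃ + (1 + l(θ)/(2n))(θ - θ̃)`. -/
def csm (n d : ℕ) (X : Fin n → EuclideanSpace ℝ (Fin d))
    (θ : EuclideanSpace ℝ (Fin d)) : EuclideanSpace ℝ (Fin d) :=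
  sampleMean n d X + (1 + elln n d X θ / (2 * n)) • (θ - sampleMean n d X)

/-! ### Auxiliary lemmas -/

open Finset

/-- AM–GM type bound: the empirical likelihood of any weight vector is at most `1`. -/
lemma prod_le_one_of_weights {n : ℕ} {w : Fin n → ℝ} (h0 : ∀ i, 0 ≤ w i)
    (h1 : ∑ i, w i = 1) : ∏ i, (n : ℝ) * w i ≤ 1 := by
  by_cases hz : ∃ i, w i = 0
  · obtain ⟨i, hi⟩ := hz
    have : ∏ i, (n : ℝ) * w i = 0 :=
      Finset.prod_eq_zero (Finset.mem_univ i) (by simp [hi])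
    simp [this]
  · push_neg at hz
    have hpos : ∀ i, 0 < w i := fun i => lt_of_le_of_ne (h0 i) (Ne.symm (hz i))
    have hn : (0 : ℝ) < n := by
      rcases Nat.eq_zero_or_pos n with h | h
      · subst h; simp at h1
      · exact_mod_cast h
    have hnp : ∀ i, 0 < (n : ℝ) * w i := fun i => mul_pos hn (hpos i)
    have key : ∑ i, Real.log ((n : ℝ) * w i) ≤ ∑ i, ((n : ℝ) * w i - 1) :=
      Finset.sum_le_sum fun i _ => Real.log_le_sub_one_of_pos (hnp i)
    have hsum : ∑ i, ((n : ℝ) * w i - 1) = 0 := by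
      rw [Finset.sum_sub_distrib, ← Finset.mul_sum, h1, mul_one]
      simp
    calc ∏ i, (n : ℝ) * w i = Real.exp (∑ i, Real.log ((n : ℝ) * w i)) := by
          rw [Real.exp_sum]
          exact Finset.prod_congr rfl fun i _ => (Real.exp_log (hnp i)).symm
      _ ≤ Real.exp 0 := Real.exp_le_exp.mpr (hsum ▸ key)
      _ = 1 := Real.exp_zero

/-- Strict AM–GM: if some weight differs from `1/n` the likelihood is strictly below `1`. -/
lemma prod_lt_one_of_weights {n : ℕ} {w : Fin n → ℝ} (h0 : ∀ i, 0 ≤ w i)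
    (h1 : ∑ i, w i = 1) {j : Fin n} (hj : (n : ℝ) * w j ≠ 1) :
    ∏ i, (n : ℝ) * w i < 1 := by
  by_cases hz : ∃ i, w i = 0
  · obtain ⟨i, hi⟩ := hz
    have : ∏ i, (n : ℝ) * w i = 0 :=
      Finset.prod_eq_zero (Finset.mem_univ i) (by simp [hi])
    simp [this]
  · push_neg at hz
    have hpos : ∀ i, 0 < w i := fun i => lt_of_le_of_ne (h0 i) (Ne.symm (hz i))
    have hn : (0 : ℝ) < n := by
      rcases Nat.eq_zero_or_pos n with h | h
      · subst h; simp at h1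
      · exact_mod_cast h
    have hnp : ∀ i, 0 < (n : ℝ) * w i := fun i => mul_pos hn (hpos i)
    have key : ∑ i, Real.log ((n : ℝ) * w i) < ∑ i, ((n : ℝ) * w i - 1) :=
      Finset.sum_lt_sum (fun i _ => Real.log_le_sub_one_of_pos (hnp i))
        ⟨j, Finset.mem_univ j, Real.log_lt_sub_one_of_pos (hnp j) hj⟩
    have hsum : ∑ i, ((n : ℝ) * w i - 1) = 0 := by
      rw [Finset.sum_sub_distrib, ← Finset.mul_sum, h1, mul_one]
      simp
    calc ∏ i, (n : ℝ) * w i = Real.exp (∑ i, Real.log ((n : ℝ) * w i)) := by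
          rw [Real.exp_sum]
          exact Finset.prod_congr rfl fun i _ => (Real.exp_log (hnp i)).symm
      _ < Real.exp 0 := Real.exp_lt_exp.mpr (hsum ▸ key)
      _ = 1 := Real.exp_zero

/-- A module algebra identity used to produce strictly positive weights. -/
lemma combo_eq {E : Type*} [AddCommGroup E] [Module ℝ E] (θ θt : E) {s nn : ℝ}
    (hs : (1 : ℝ) + s ≠ 0) (hn : nn ≠ 0) :
    (1 + s)⁻¹ • (θ + s • (θ - θt)) + (s / ((1 + s) * nn)) • (nn • θt) = θ := by
  match_scalars <;> (field_simp; try ring)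

/-- Points of the convex hull of the range of `X` admit weight vectors. -/
lemma exists_weights {n d : ℕ} {X : Fin n → EuclideanSpace ℝ (Fin d)}
    {θ : EuclideanSpace ℝ (Fin d)} (hθ : θ ∈ convexHull ℝ (Set.range X)) :
    ∃ w, w ∈ Wset n d X θ := by
  rw [convexHull_range_eq_exists_affineCombination] at hθ
  obtain ⟨s, w, h0, h1, h2⟩ := hθ
  refine ⟨fun i => if i ∈ s then w i else 0, fun i => ?_, ?_, ?_⟩
  · dsimp only; split
    · exact h0 i ‹_›
    · exact le_refl 0
  · rw [Finset.sum_ite_mem, Finset.univ_inter]; exact h1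
  · simp only [ite_smul, zero_smul]
    rw [Finset.sum_ite_mem, Finset.univ_inter,
      ← Finset.affineCombination_eq_linear_combination s X w h1]
    exact h2

/-- The uniform weights witness `θ̃ ∈ convexHull`. -/
lemma uniform_mem_Wset {n d : ℕ} {X : Fin n → EuclideanSpace ℝ (Fin d)} (hn : 0 < n) :
    (fun _ : Fin n => (n : ℝ)⁻¹) ∈ Wset n d X (sampleMean n d X) := by
  have hn0 : (n : ℝ) ≠ 0 := Nat.cast_ne_zero.mpr hn.ne'
  refine ⟨fun i => by positivity, ?_, ?_⟩
  · simp [Finset.sum_const, Finset.card_univ, hn0]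
  · rw [sampleMean, Finset.smul_sum]

/-- Interior points of the convex hull admit strictly positive weight vectors. -/
lemma exists_pos_weights {n d : ℕ} {X : Fin n → EuclideanSpace ℝ (Fin d)}
    {θ : EuclideanSpace ℝ (Fin d)} (hn : 0 < n)
    (hθ : θ ∈ interior (convexHull ℝ (Set.range X))) :
    ∃ w ∈ Wset n d X θ, ∀ i, 0 < w i := by
  have hn0 : (n : ℝ) ≠ 0 := Nat.cast_ne_zero.mpr hn.ne'
  have hnR : (0:ℝ) < n := Nat.cast_pos.mpr hn
  by_cases he : θ = sampleMean n d X
  · exact ⟨fun _ => (n : ℝ)⁻¹, he ▸ uniform_mem_Wset hn, fun i => by positivity⟩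
  · obtain ⟨ε, hε, hball⟩ := Metric.isOpen_iff.mp isOpen_interior θ hθ
    have hsub : θ - sampleMean n d X ≠ 0 := sub_ne_zero.mpr he
    have hnorm : 0 < ‖θ - sampleMean n d X‖ := norm_pos_iff.mpr hsub
    set s : ℝ := ε / (2 * ‖θ - sampleMean n d X‖) with hs_def
    have hs : 0 < s := by positivity
    have hs1 : (1 : ℝ) + s ≠ 0 := by positivity
    have hθ' : θ + s • (θ - sampleMean n d X) ∈ convexHull ℝ (Set.range X) := by
      apply interior_subset
      apply hball
      rw [Metric.mem_ball, dist_eq_norm]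
      have h1 : θ + s • (θ - sampleMean n d X) - θ = s • (θ - sampleMean n d X) := by abel
      rw [h1, norm_smul, Real.norm_eq_abs, abs_of_pos hs]
      have hkey : s * ‖θ - sampleMean n d X‖ = ε / 2 := by
        rw [hs_def]; field_simp
      nlinarith [hkey]
    obtain ⟨v, hv0, hv1, hv2⟩ := exists_weights hθ'
    refine ⟨fun i => (1 + s)⁻¹ * v i + s / ((1 + s) * n), ⟨fun i => ?_, ?_, ?_⟩, fun i => ?_⟩
    · have := hv0 i; positivity
    · rw [Finset.sum_add_distrib, ← Finset.mul_sum, hv1, Finset.sum_const,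
        Finset.card_univ, Fintype.card_fin, nsmul_eq_mul]
      field_simp
    · have key : ∑ i, ((1 + s)⁻¹ * v i + s / ((1 + s) * n)) • X i
          = (1 + s)⁻¹ • (θ + s • (θ - sampleMean n d X))
            + (s / ((1 + s) * n)) • ((n : ℝ) • sampleMean n d X) := by
        have hXsum : ∑ i, X i = (n : ℝ) • sampleMean n d X := by
          rw [sampleMean, smul_smul, mul_inv_cancel₀ hn0, one_smul]
        simp only [add_smul, Finset.sum_add_distrib, mul_smul, ← Finset.smul_sum, hv2, hXsum]
      rw [key]
      exact combo_eq θ (sampleMean n d X) hs1 hn0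
    · have := hv0 i; positivity

/-- The sample mean lies in the interior of the convex hull. -/
lemma sampleMean_mem_interior {n d : ℕ} {X : Fin n → EuclideanSpace ℝ (Fin d)} (hn : 0 < n)
    (hspan : (interior (convexHull ℝ (Set.range X))).Nonempty) :
    sampleMean n d X ∈ interior (convexHull ℝ (Set.range X)) := by
  have hn0 : (n : ℝ) ≠ 0 := Nat.cast_ne_zero.mpr hn.ne'
  have hnR : (0:ℝ) < n := Nat.cast_pos.mpr hn
  obtain ⟨y, hy⟩ := hspan
  obtain ⟨v, hv0, hv1, hv2⟩ := exists_weights (interior_subset hy)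
  set s : ℝ := (n : ℝ)⁻¹ with hs_def
  have hs : 0 < s := by positivity
  have hs1 : (0:ℝ) < 1 + s := by linarith
  have hsn : s * n = 1 := inv_mul_cancel₀ hn0
  have hvle : ∀ i, v i ≤ 1 := fun i =>
    hv1 ▸ Finset.single_le_sum (fun j _ => hv0 j) (Finset.mem_univ i)
  set u : Fin n → ℝ := fun i => (1 + s) / n - s * v i with hu_def
  have hu0 : ∀ i, 0 ≤ u i := by
    intro i
    have h1 : s * v i ≤ s := by nlinarith [hv0 i, hvle i]
    have h2 : s ≤ (1 + s) / n := by
      rw [le_div_iff₀ hnR]; nlinarith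
    simp only [hu_def]; linarith
  have husum : ∑ i, u i = 1 := by
    simp only [hu_def]
    rw [Finset.sum_sub_distrib, ← Finset.mul_sum, hv1, Finset.sum_const,
      Finset.card_univ, Fintype.card_fin, nsmul_eq_mul]
    field_simp
    ring
  have hz : (∑ i, u i • X i) ∈ convexHull ℝ (Set.range X) :=
    mem_convexHull_of_exists_fintype u X hu0 husum (fun i => Set.mem_range_self i) rfl
  have hzeq : ∑ i, u i • X i = (1 + s) • sampleMean n d X - s • y := by
    have hXsum : ∑ i, X i = (n : ℝ) • sampleMean n d X := by
      rw [sampleMean, smul_smul, mul_inv_cancel₀ hn0, one_smul]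
    calc ∑ i, u i • X i = ∑ i, (((1 + s) / n) • X i - s • (v i • X i)) := by
          refine Finset.sum_congr rfl fun i _ => ?_
          simp only [hu_def, sub_smul, mul_smul]
      _ = ((1 + s) / n) • ∑ i, X i - s • ∑ i, v i • X i := by
          rw [Finset.sum_sub_distrib, Finset.smul_sum, Finset.smul_sum]
      _ = (1 + s) • sampleMean n d X - s • y := by
          rw [hv2, hXsum, smul_smul, div_mul_cancel₀ _ hn0]
  have hcombo : sampleMean n d X
      = (1 + s)⁻¹ • (∑ i, u i • X i) + (s / (1 + s)) • y := by
    rw [hzeq]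
    match_scalars <;> field_simp <;> ring
  rw [hcombo]
  exact (convex_convexHull ℝ _).combo_self_interior_mem_interior hz hy
    (by positivity) (by positivity) (by field_simp)

/-- The set of weight vectors is compact. -/
lemma wset_isCompact (n d : ℕ) (X : Fin n → EuclideanSpace ℝ (Fin d))
    (θ : EuclideanSpace ℝ (Fin d)) : IsCompact (Wset n d X θ) := by
  have hsub : Wset n d X θ ⊆ Set.Icc (0 : Fin n → ℝ) 1 := by
    rintro w ⟨h0, h1, -⟩
    rw [Set.mem_Icc]
    constructor
    · intro i; exact h0 i
    · intro i
      calc w i ≤ ∑ j, w j := Finset.single_le_sum (fun j _ => h0 j) (Finset.mem_univ i)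
        _ = 1 := h1
  have hc1 : IsClosed {w : Fin n → ℝ | ∀ i, 0 ≤ w i} := by
    have : {w : Fin n → ℝ | ∀ i, 0 ≤ w i} = ⋂ i, {w | 0 ≤ w i} := by ext; simp
    rw [this]
    exact isClosed_iInter fun i => isClosed_le continuous_const (continuous_apply i)
  have hc2 : IsClosed {w : Fin n → ℝ | ∑ i, w i = 1} :=
    isClosed_eq (continuous_finset_sum _ fun i _ => continuous_apply i) continuous_const
  have hc3 : IsClosed {w : Fin n → ℝ | ∑ i, w i • X i = θ} :=
    isClosed_eq (continuous_finset_sum _ fun i _ =>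
      (continuous_apply i).smul continuous_const) continuous_const
  have heq : Wset n d X θ
      = {w : Fin n → ℝ | ∀ i, 0 ≤ w i} ∩
        ({w : Fin n → ℝ | ∑ i, w i = 1} ∩ {w : Fin n → ℝ | ∑ i, w i • X i = θ}) := rfl
  exact isCompact_Icc.of_isClosed_subset (heq ▸ (hc1.inter (hc2.inter hc3))) hsub

/-- Theorem 1(i): The sample mean `θ̃` lies in `Θₙ`, is a fixed point
of the composite similarity mapping `h`, and is its unique fixed point on `Θₙ`. -/
theorem stmt6 (n d : ℕ) (hn : 0 < n) (hd : 0 < d)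
    (X : Fin n → EuclideanSpace ℝ (Fin d))
    (hspan : (interior (convexHull ℝ (Set.range X))).Nonempty) :
    sampleMean n d X ∈ interior (convexHull ℝ (Set.range X)) ∧
      csm n d X (sampleMean n d X) = sampleMean n d X ∧
      (∀ θ ∈ interior (convexHull ℝ (Set.range X)),
        θ ≠ sampleMean n d X → csm n d X θ ≠ θ) := by
  have hn0 : (n : ℝ) ≠ 0 := Nat.cast_ne_zero.mpr hn.ne'
  have hbdd : ∀ θ', BddAbove ((fun w => ∏ i, (n : ℝ) * w i) '' Wset n d X θ') := by
    intro θ'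
    refine ⟨1, ?_⟩
    rintro x ⟨w, ⟨h0, h1, -⟩, rfl⟩
    exact prod_le_one_of_weights h0 h1
  have huni := uniform_mem_Wset (X := X) hn
  have hRmean : elR n d X (sampleMean n d X) = 1 := by
    rw [elR]
    apply le_antisymm
    · apply csSup_le ⟨_, Set.mem_image_of_mem _ huni⟩
      rintro x ⟨w, ⟨h0, h1, -⟩, rfl⟩
      exact prod_le_one_of_weights h0 h1
    · refine le_csSup (hbdd _) ⟨_, huni, ?_⟩
      simp [Finset.prod_const, mul_inv_cancel₀ hn0]
  have hellnmean : elln n d X (sampleMean n d X) = 0 := by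
    rw [elln, hRmean, Real.log_one, mul_zero]
  have hfix : csm n d X (sampleMean n d X) = sampleMean n d X := by
    rw [csm, hellnmean]
    simp
  refine ⟨sampleMean_mem_interior hn hspan, hfix, ?_⟩
  intro θ hθ hne heq
  have hsub : θ - sampleMean n d X ≠ 0 := sub_ne_zero.mpr hne
  rw [csm, ← eq_sub_iff_add_eq'] at heq
  rw [add_smul, one_smul] at heq
  have hzero : (elln n d X θ / (2 * n)) • (θ - sampleMean n d X) = 0 :=
    add_eq_left.mp heq
  rcases smul_eq_zero.mp hzero with h | h
  · have h2n : (2 * (n : ℝ)) ≠ 0 := by positivity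
    have helln : elln n d X θ = 0 := (div_eq_zero_iff.mp h).resolve_right h2n
    have hlog : Real.log (elR n d X θ) = 0 := by
      rw [elln] at helln; linarith
    obtain ⟨w, hw, hwpos⟩ := exists_pos_weights hn hθ
    have hRpos : 0 < elR n d X θ := by
      have hp : 0 < ∏ i, (n : ℝ) * w i :=
        Finset.prod_pos fun i _ => mul_pos (Nat.cast_pos.mpr hn) (hwpos i)
      refine lt_of_lt_of_le hp ?_
      rw [elR]
      exact le_csSup (hbdd θ) ⟨w, hw, rfl⟩
    have hRlt : elR n d X θ < 1 := by
      have himg : IsCompact ((fun w => ∏ i, (n : ℝ) * w i) '' Wset n d X θ) :=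
        (wset_isCompact n d X θ).image
          (continuous_finset_prod _ fun i _ => continuous_const.mul (continuous_apply i))
      have hmem : elR n d X θ ∈ (fun w => ∏ i, (n : ℝ) * w i) '' Wset n d X θ := by
        rw [elR]
        exact himg.sSup_mem ⟨_, Set.mem_image_of_mem _ hw⟩
      obtain ⟨w', ⟨h0, h1, h2⟩, hEq⟩ := hmem
      have hex : ∃ j, w' j ≠ (n : ℝ)⁻¹ := by
        by_contra hall
        push_neg at hall
        apply hne
        rw [← h2]
        simp only [hall]
        rw [sampleMean, Finset.smul_sum]
      obtain ⟨j, hj⟩ := hex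
      rw [← hEq]
      refine prod_lt_one_of_weights h0 h1 (j := j) ?_
      intro hcontra
      apply hj
      calc w' j = (n : ℝ)⁻¹ * ((n : ℝ) * w' j) := by
            rw [← mul_assoc, inv_mul_cancel₀ hn0, one_mul]
        _ = (n : ℝ)⁻¹ := by rw [hcontra, mul_one]
    exact absurd hlog (ne_of_lt (Real.log_neg hRpos hRlt))
  · exact hsub h
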